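/- Let A be a G-Frobenius algebra over k with trivial character χ ≡ 1 that is k[G]-Galois over A_e (for every g ∈ G the k-linear span of products A_{g⁻¹}·A_g equals A_e), and suppose dim_k A_e = 1. Then there exists a normalized 2-cocycle α on G with values in kˣ and an isomorphism of G-graded unital k-algebras A ≅ k^α[G]. -/

import Mathlib

/-- A `G`-Frobenius algebra over a field `k` of characteristic zero (Kaufmann):
a finite-dimensional `G`-graded `k`-vector space `A = ⊕_g A_g` (the grading given by
submodules together with the projections onto them), with an associative bilinear
multiplication respecting the grading, unit `1 ∈ A_e`, a nondegenerate graded invariant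
bilinear form `η`, a `G`-action `φ` by algebra automorphisms with
`φ_g(A_h) ⊆ A_{g h g⁻¹}`, and a character `χ : G → kˣ`, satisfying twisted
commutativity, projective self-invariance, projective invariance of the metric and the
projective trace axiom. -/
structure GFrobeniusAlgebra (G : Type) [Group G] [Fintype G]
    (k : Type) [Field k] [CharZero k]
    (A : Type) [AddCommGroup A] [Module k A] : Type where
  grading : G → Submodule k A
  proj : G → A →ₗ[k] A
  proj_mem : ∀ (g : G) (a : A), proj g a ∈ grading g
  proj_of_mem : ∀ (g : G), ∀ a ∈ grading g, proj g a = a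
  proj_of_ne : ∀ (g h : G), g ≠ h → ∀ a ∈ grading g, proj h a = 0
  sum_proj : ∀ a : A, (∑ g : G, proj g a) = a
  finiteDim : FiniteDimensional k A
  mul : A →ₗ[k] A →ₗ[k] A
  mul_assoc' : ∀ a b c : A, mul (mul a b) c = mul a (mul b c)
  one : A
  one_mem : one ∈ grading 1
  one_mul' : ∀ a : A, mul one a = a
  mul_one' : ∀ a : A, mul a one = a
  mul_mem : ∀ (g h : G), ∀ a ∈ grading g, ∀ b ∈ grading h, mul a b ∈ grading (g * h)
  η : A →ₗ[k] A →ₗ[k] k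
  η_nondeg : ∀ a : A, (∀ b : A, η a b = 0) → a = 0
  η_graded : ∀ (g h : G), g * h ≠ 1 → ∀ a ∈ grading g, ∀ b ∈ grading h, η a b = 0
  η_invariant : ∀ a b c : A, η a (mul b c) = η (mul a b) c
  φ : G → A →ₗ[k] A
  φ_one : φ 1 = LinearMap.id
  φ_mul : ∀ g h : G, φ (g * h) = φ g ∘ₗ φ h
  φ_algebra : ∀ (g : G) (a b : A), φ g (mul a b) = mul (φ g a) (φ g b)
  φ_unit : ∀ g : G, φ g one = one
  φ_grading : ∀ (g h : G), ∀ a ∈ grading h, φ g a ∈ grading (g * h * g⁻¹)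
  χ : G →* kˣ
  twisted_comm : ∀ (g : G), ∀ a ∈ grading g, ∀ b : A, mul a b = mul (φ g b) a
  self_invariance : ∀ (g : G), ∀ a ∈ grading g, φ g a = (((χ g)⁻¹ : kˣ) : k) • a
  metric_invariance : ∀ (g : G) (a b : A),
    η (φ g a) (φ g b) = ((((χ g)⁻¹ : kˣ) : k)) ^ 2 * η a b
  trace_axiom : ∀ (g h : G), ∀ c ∈ grading (g * h * g⁻¹ * h⁻¹),
    ((χ h : kˣ) : k) * LinearMap.trace k A (proj g ∘ₗ mul c ∘ₗ φ h ∘ₗ proj g)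
      = ((χ g⁻¹ : kˣ) : k) * LinearMap.trace k A (proj h ∘ₗ φ g⁻¹ ∘ₗ mul c ∘ₗ proj h)

/-- The multiplication of the twisted group ring `k^α[G]` on `G →₀ k`
(basis `ĝ = Finsupp.single g 1`), determined bilinearly by `ĝ · ĥ = α(g,h) • (g*h)^`. -/
noncomputable def twistedMul {G : Type} [Group G] {k : Type} [Field k]
    (α : G → G → kˣ) (f₁ f₂ : G →₀ k) : G →₀ k :=
  f₁.sum fun x a => f₂.sum fun y b => Finsupp.single (x * y) (a * b * (α x y : k))

/-- If a `G`-Frobenius algebra `A` with trivial character is `k[G]`-Galois over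
`A_e` and `dim_k A_e = 1`, then there is a normalized 2-cocycle `α : G × G → kˣ` and an
isomorphism of `G`-graded unital `k`-algebras `A ≅ k^α[G]`. -/
noncomputable def twistedMulMap {G : Type} [Group G] {k : Type} [Field k]
    (α : G → G → kˣ) : (G →₀ k) →ₗ[k] (G →₀ k) →ₗ[k] (G →₀ k) :=
  Finsupp.lift _ k G fun x => Finsupp.lift (G →₀ k) k G fun y =>
    (α x y : k) • Finsupp.single (x * y) 1

lemma twistedMul_eq_map {G : Type} [Group G] {k : Type} [Field k]
    (α : G → G → kˣ) (f₁ f₂ : G →₀ k) :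
    twistedMul α f₁ f₂ = twistedMulMap α f₁ f₂ := by
  rw [twistedMulMap, Finsupp.lift_apply, LinearMap.finsupp_sum_apply, twistedMul]
  refine Finsupp.sum_congr fun x _ => ?_
  rw [LinearMap.smul_apply, Finsupp.lift_apply, Finsupp.smul_sum]
  refine Finsupp.sum_congr fun y _ => ?_
  rw [Finsupp.smul_single, Finsupp.smul_single, Finsupp.smul_single, smul_eq_mul,
    smul_eq_mul, smul_eq_mul, mul_one]
  ring_nf

lemma twistedMulMap_single {G : Type} [Group G] {k : Type} [Field k]
    (α : G → G → kˣ) (g h : G) :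
    twistedMulMap α (Finsupp.single g 1) (Finsupp.single h 1)
      = (α g h : k) • Finsupp.single (g * h) 1 := by
  rw [twistedMulMap, Finsupp.lift_apply, Finsupp.sum_single_index, one_smul,
    Finsupp.lift_apply, Finsupp.sum_single_index, one_smul]
  · simp
  · simp

theorem one_dimensional_galois_is_twisted_group_ring (G : Type) [Group G] [Fintype G]
    (k : Type) [Field k] [CharZero k] (A : Type) [AddCommGroup A] [Module k A]
    (F : GFrobeniusAlgebra G k A)
    (hχ : ∀ g : G, F.χ g = 1)
    (hGalois : ∀ g : G,
      Submodule.span k {x : A | ∃ a ∈ F.grading g⁻¹, ∃ b ∈ F.grading g, x = F.mul a b}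
        = F.grading 1)
    (hdim : Module.finrank k (F.grading (1 : G)) = 1) :
    ∃ α : G → G → kˣ,
      (∀ g h l : G, α g h * α (g * h) l = α h l * α g (h * l)) ∧
      α 1 1 = 1 ∧
      ∃ Φ : A ≃ₗ[k] (G →₀ k),
        Φ F.one = Finsupp.single 1 1 ∧
        (∀ x y : A, Φ (F.mul x y) = twistedMul α (Φ x) (Φ y)) ∧
        (∀ g : G, Submodule.map (Φ : A →ₗ[k] (G →₀ k)) (F.grading g)
            = Submodule.span k {Finsupp.single g (1 : k)}) := by
  classical
  haveI := F.finiteDim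
  -- the unit is nonzero
  have hone : F.one ≠ 0 := by
    intro h
    have hall : ∀ a : A, a = 0 := fun a => by
      rw [← F.one_mul' a, h, map_zero, LinearMap.zero_apply]
    have hbot : F.grading (1 : G) = ⊥ := by
      apply le_bot_iff.mp
      intro x _
      simp [hall x]
    rw [hbot] at hdim
    simp at hdim
  -- A_e is spanned by the unit
  have hA1 : Submodule.span k {F.one} = F.grading 1 := by
    apply Submodule.eq_of_le_of_finrank_le
    · rw [Submodule.span_le, Set.singleton_subset_iff]; exact F.one_mem
    · rw [hdim, finrank_span_singleton hone]
  -- existence of invertible homogeneous elements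
  have key : ∀ g : G, ∃ b, b ∈ F.grading g ∧ ∃ a, a ∈ F.grading g⁻¹ ∧
      F.mul a b = F.one ∧ F.mul b a = F.one ∧ (g = 1 → b = F.one) := by
    intro g
    by_cases hg : g = 1
    · subst hg
      exact ⟨F.one, F.one_mem, F.one, by rw [inv_one]; exact F.one_mem,
        F.one_mul' _, F.one_mul' _, fun _ => rfl⟩
    · have hnz : ∃ a ∈ F.grading g⁻¹, ∃ b ∈ F.grading g, F.mul a b ≠ 0 := by
        by_contra hcon
        push_neg at hcon
        have hsub : {x : A | ∃ a ∈ F.grading g⁻¹, ∃ b ∈ F.grading g, x = F.mul a b}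
            ⊆ {0} := by
          rintro x ⟨a, ha, b, hb, rfl⟩
          exact hcon a ha b hb
        have : F.grading 1 ≤ ⊥ := by
          rw [← hGalois g]
          calc Submodule.span k {x : A | ∃ a ∈ F.grading g⁻¹, ∃ b ∈ F.grading g, x = F.mul a b}
              ≤ Submodule.span k {(0 : A)} := Submodule.span_mono hsub
            _ = ⊥ := Submodule.span_zero_singleton k
        exact hone ((Submodule.mem_bot k).mp (this F.one_mem))
      obtain ⟨a, ha, b, hb, hab⟩ := hnz
      have hmem : F.mul a b ∈ F.grading 1 := by
        have := F.mul_mem g⁻¹ g a ha b hb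
        rwa [inv_mul_cancel] at this
      rw [← hA1] at hmem
      obtain ⟨c, hc⟩ := Submodule.mem_span_singleton.mp hmem
      have hcne : c ≠ 0 := by
        rintro rfl
        rw [zero_smul] at hc
        exact hab hc.symm
      have ha' : c⁻¹ • a ∈ F.grading g⁻¹ := Submodule.smul_mem _ _ ha
      have hab' : F.mul (c⁻¹ • a) b = F.one := by
        rw [map_smul, LinearMap.smul_apply, ← hc, smul_smul, inv_mul_cancel₀ hcne,
          one_smul]
      have ha'ne : c⁻¹ • a ≠ 0 := by
        intro h0
        rw [h0, map_zero, LinearMap.zero_apply] at hab'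
        exact hone hab'.symm
      have hmem2 : F.mul b (c⁻¹ • a) ∈ F.grading 1 := by
        have := F.mul_mem g g⁻¹ b hb _ ha'
        rwa [mul_inv_cancel] at this
      rw [← hA1] at hmem2
      obtain ⟨d, hd⟩ := Submodule.mem_span_singleton.mp hmem2
      have hda : d • (c⁻¹ • a) = c⁻¹ • a := by
        have h1 : F.mul (c⁻¹ • a) (F.mul b (c⁻¹ • a)) = c⁻¹ • a := by
          rw [← F.mul_assoc', hab', F.one_mul']
        rw [← hd] at h1
        rwa [map_smul, F.mul_one'] at h1
      have hd1 : d = 1 := by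
        by_contra hdne
        have h2 : (d - 1) • (c⁻¹ • a) = 0 := by rw [sub_smul, one_smul, hda, sub_self]
        rcases smul_eq_zero.mp h2 with h | h
        · exact hdne (sub_eq_zero.mp h)
        · exact ha'ne h
      have hba' : F.mul b (c⁻¹ • a) = F.one := by rw [← hd, hd1, one_smul]
      exact ⟨b, hb, c⁻¹ • a, ha', hab', hba', fun h => absurd h hg⟩
  choose v hv w hw hwv hvw hv1 using key
  -- each v g is nonzero
  have hvne : ∀ g : G, v g ≠ 0 := by
    intro g h
    apply hone
    rw [← hvw g, h, map_zero, LinearMap.zero_apply]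
  -- each grading is spanned by v g
  have hspan : ∀ g : G, F.grading g = Submodule.span k {v g} := by
    intro g
    apply le_antisymm
    · intro x hx
      have hxw : F.mul x (w g) ∈ F.grading 1 := by
        have := F.mul_mem g g⁻¹ x hx (w g) (hw g)
        rwa [mul_inv_cancel] at this
      rw [← hA1] at hxw
      obtain ⟨t, ht⟩ := Submodule.mem_span_singleton.mp hxw
      have : t • v g = x := by
        have h1 : F.mul (F.mul x (w g)) (v g) = x := by
          rw [F.mul_assoc', hwv, F.mul_one']
        rw [← ht, map_smul, LinearMap.smul_apply, F.one_mul'] at h1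
        exact h1
      exact Submodule.mem_span_singleton.mpr ⟨t, this⟩
    · rw [Submodule.span_le, Set.singleton_subset_iff]; exact hv g
  -- structure constants
  have hc : ∀ g h : G, ∃ c : k, c ≠ 0 ∧ c • v (g * h) = F.mul (v g) (v h) := by
    intro g h
    have hmem : F.mul (v g) (v h) ∈ F.grading (g * h) := F.mul_mem g h _ (hv g) _ (hv h)
    rw [hspan (g * h)] at hmem
    obtain ⟨c, hc⟩ := Submodule.mem_span_singleton.mp hmem
    refine ⟨c, ?_, hc⟩
    rintro rfl
    rw [zero_smul] at hc
    have hP : F.mul (F.mul (v g) (v h)) (F.mul (w h) (w g)) = F.one := by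
      rw [← F.mul_assoc', F.mul_assoc' (v g), hvw, F.mul_one', hvw]
    rw [← hc, map_zero, LinearMap.zero_apply] at hP
    exact hone hP.symm
  choose c hc0 hcv using hc
  set αu : G → G → kˣ := fun g h => Units.mk0 (c g h) (hc0 g h) with hαu
  -- scalars acting on nonzero vectors are determined
  have hcancel : ∀ (g : G) (s t : k), s • v g = t • v g → s = t := by
    intro g s t hst
    have : (s - t) • v g = 0 := by rw [sub_smul, hst, sub_self]
    rcases smul_eq_zero.mp this with h | h
    · exact sub_eq_zero.mp h
    · exact absurd h (hvne g)
  -- the cocycle identity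
  have hcocycle : ∀ g h l : G, αu g h * αu (g * h) l = αu h l * αu g (h * l) := by
    intro g h l
    apply Units.ext
    have h1 : F.mul (F.mul (v g) (v h)) (v l) = (c g h * c (g * h) l) • v (g * h * l) := by
      rw [← hcv g h, map_smul, LinearMap.smul_apply, ← hcv (g * h) l, smul_smul]
    have h2 : F.mul (v g) (F.mul (v h) (v l)) = (c h l * c g (h * l)) • v (g * (h * l)) := by
      rw [← hcv h l, map_smul, ← hcv g (h * l), smul_smul]
    rw [F.mul_assoc'] at h1
    rw [mul_assoc] at h1
    have := hcancel (g * (h * l)) _ _ (h1.symm.trans h2)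
    simpa [hαu] using this
  -- normalization
  have hnorm : αu 1 1 = 1 := by
    apply Units.ext
    have h1 : c 1 1 • v ((1 : G) * 1) = F.one := by
      rw [hcv 1 1, hv1 1 rfl, F.one_mul']
    rw [one_mul, hv1 1 rfl] at h1
    have : c 1 1 • F.one = (1 : k) • F.one := by rw [h1, one_smul]
    have he : c 1 1 = 1 := by
      have h2 : (c 1 1 - 1) • F.one = 0 := by rw [sub_smul, this, one_smul, sub_self]
      rcases smul_eq_zero.mp h2 with h | h
      · exact sub_eq_zero.mp h
      · exact absurd h hone
    simp [hαu, he]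
  -- linear independence of the v g
  have hindep : LinearIndependent k v := by
    rw [linearIndependent_iff']
    intro s f hsum i hi
    have hproj := congrArg (F.proj i) hsum
    rw [map_sum, map_zero] at hproj
    have hterm : ∀ j ∈ s, F.proj i (f j • v j) = if j = i then f i • v i else 0 := by
      intro j _
      by_cases hji : j = i
      · subst hji
        rw [map_smul, F.proj_of_mem j (v j) (hv j), if_pos rfl]
      · rw [map_smul, F.proj_of_ne j i hji (v j) (hv j), smul_zero, if_neg hji]
    rw [Finset.sum_congr rfl hterm, Finset.sum_ite_eq' s i (fun _ => f i • v i),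
      if_pos hi] at hproj
    rcases smul_eq_zero.mp hproj with h | h
    · exact h
    · exact absurd h (hvne i)
  have hspan_top : ⊤ ≤ Submodule.span k (Set.range v) := by
    intro a _
    rw [← F.sum_proj a]
    apply Submodule.sum_mem
    intro g _
    have hmem : F.proj g a ∈ F.grading g := F.proj_mem g a
    rw [hspan g] at hmem
    exact Submodule.span_mono (Set.singleton_subset_iff.mpr (Set.mem_range_self g)) hmem
  let B : Module.Basis G k A := Module.Basis.mk hindep hspan_top
  have hB : ∀ g : G, B g = v g := fun g => Module.Basis.mk_apply hindep hspan_top g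
  refine ⟨αu, hcocycle, hnorm, B.repr, ?_, ?_, ?_⟩
  · rw [← hv1 1 rfl, ← hB]
    exact B.repr_self 1
  · have hΦv : ∀ g : G, B.repr (v g) = Finsupp.single g 1 := fun g => by
      rw [← hB]; exact B.repr_self g
    have hmaps : F.mul.compr₂ (B.repr : A →ₗ[k] (G →₀ k))
        = (twistedMulMap αu).compl₁₂ (B.repr : A →ₗ[k] (G →₀ k))
            (B.repr : A →ₗ[k] (G →₀ k)) := by
      apply LinearMap.ext_basis B B
      intro g h
      simp only [LinearMap.compr₂_apply, LinearMap.compl₁₂_apply, hB,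
        LinearEquiv.coe_coe]
      rw [hΦv, hΦv, twistedMulMap_single, ← hcv g h, map_smul, hΦv]
      simp [hαu]
    intro x y
    rw [twistedMul_eq_map]
    have := LinearMap.congr_fun (LinearMap.congr_fun hmaps x) y
    simpa using this
  · intro g
    have hΦv : B.repr (v g) = Finsupp.single g 1 := by
      rw [← hB]; exact B.repr_self g
    rw [hspan g, Submodule.map_span, Set.image_singleton]
    rw [LinearEquiv.coe_coe, hΦv]
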